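/- Let θ := π/10 and set [m] := sin(mθ)/sin θ for m ∈ ℤ. Let M be the real 3×3 matrix M := (1/[2]^{3/2}) · [[ √([2][3]), √[4], √[4] ], [ √[4], √[2], √[2] ], [ √[4], √[2], √[2] ]], where √ is the real square root. Then M·M = [2]·M. -/

import Mathlib

set_option maxHeartbeats 1000000

/-- Trigonometric quantum integer `[m] = sin(m·π/10)/sin(π/10)`,
i.e. `[m]_q` at `q = e^{2πi/20}`. -/
noncomputable def qi10 (m : ℤ) : ℝ :=
  Real.sin (m * (Real.pi / 10)) / Real.sin (Real.pi / 10)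

/-- The 3×3 block U^{b_i}_{b_{i+1}} of the exceptional cell system on
Γ^{4,6,⊂}. -/
noncomputable def Ubb : Matrix (Fin 3) (Fin 3) ℝ :=
  (1 / Real.sqrt (qi10 2 ^ 3)) •
    !![Real.sqrt (qi10 2 * qi10 3), Real.sqrt (qi10 4), Real.sqrt (qi10 4);
       Real.sqrt (qi10 4), Real.sqrt (qi10 2), Real.sqrt (qi10 2);
       Real.sqrt (qi10 4), Real.sqrt (qi10 2), Real.sqrt (qi10 2)]

/-- The Hecke relation for the 3×3 block U^{b_i}_{b_{i+1}}. -/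
theorem threeByThree_hecke_block : Ubb * Ubb = qi10 2 • Ubb := by
  have hpi := Real.pi_pos
  set θ : ℝ := Real.pi / 10 with hθ
  have hθpos : 0 < θ := by positivity
  have hθlt : θ < Real.pi / 2 := by rw [hθ]; linarith
  have hs : 0 < Real.sin θ := Real.sin_pos_of_pos_of_lt_pi hθpos (by linarith)
  have hc : 0 < Real.cos θ := Real.cos_pos_of_mem_Ioo ⟨by linarith, hθlt⟩
  obtain ⟨x, hxdef⟩ : ∃ x : ℝ, x = 2 * Real.cos θ := ⟨_, rfl⟩
  have hxpos : 0 < x := by rw [hxdef]; positivity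
  have hpyth : Real.sin θ ^ 2 + Real.cos θ ^ 2 = 1 := Real.sin_sq_add_cos_sq θ
  have h2 : qi10 2 = x := by
    unfold qi10
    rw [show ((2:ℤ):ℝ) * (Real.pi/10) = 2 * θ by push_cast; rw [hθ],
      Real.sin_two_mul, ← hθ]
    field_simp [hxdef]
    linarith
  have h3 : qi10 3 = x ^ 2 - 1 := by
    unfold qi10
    rw [show ((3:ℤ):ℝ) * (Real.pi/10) = 3 * θ by push_cast; rw [hθ],
      Real.sin_three_mul, ← hθ]
    field_simp [hxdef]
    nlinarith [hs, hpyth]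
  have h4 : qi10 4 = x * (x ^ 2 - 2) := by
    unfold qi10
    rw [show ((4:ℤ):ℝ) * (Real.pi/10) = 2 * (2 * θ) by push_cast; rw [hθ]; ring,
      Real.sin_two_mul, Real.sin_two_mul, Real.cos_two_mul, ← hθ]
    field_simp [hxdef]
    rw [hxdef]
    nlinarith [hs, hpyth]
  have hsqrt5 : Real.sqrt 5 ^ 2 = 5 := Real.sq_sqrt (by norm_num)
  have hsqrt5pos : 0 < Real.sqrt 5 := Real.sqrt_pos.mpr (by norm_num)
  have hx2 : x ^ 2 = (5 + Real.sqrt 5) / 2 := by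
    have hcs := Real.cos_sq θ
    rw [show 2 * θ = Real.pi / 5 by rw [hθ]; ring, Real.cos_pi_div_five] at hcs
    rw [hxdef]
    nlinarith [hcs]
  have hx4 : x ^ 4 = 5 * x ^ 2 - 5 := by nlinarith [hx2, hsqrt5]
  have hx2ge : 0 ≤ x ^ 2 - 2 := by nlinarith [hsqrt5pos, hx2]
  obtain ⟨u, hudef⟩ : ∃ u : ℝ, u = Real.sqrt x := ⟨_, rfl⟩
  obtain ⟨t, htdef⟩ : ∃ t : ℝ, t = Real.sqrt (x ^ 2 - 2) := ⟨_, rfl⟩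
  have hu : u ^ 2 = x := by rw [hudef]; exact Real.sq_sqrt hxpos.le
  have ht : t ^ 2 = x ^ 2 - 2 := by rw [htdef]; exact Real.sq_sqrt hx2ge
  have hupos : 0 < u := by rw [hudef]; exact Real.sqrt_pos.mpr hxpos
  have e1 : Real.sqrt (qi10 2 * qi10 3) = u * (x ^ 2 - 2) := by
    rw [h2, h3, show x * (x ^ 2 - 1) = x * (x ^ 2 - 2) ^ 2 by linear_combination (-x) * hx4,
      Real.sqrt_mul hxpos.le, Real.sqrt_sq hx2ge, ← hudef]
  have e2 : Real.sqrt (qi10 4) = u * t := by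
    rw [h4, Real.sqrt_mul hxpos.le, ← hudef, ← htdef]
  have e3 : Real.sqrt (qi10 2) = u := by rw [h2, hudef]
  have e4 : Real.sqrt (qi10 2 ^ 3) = x * u := by
    rw [h2, show x ^ 3 = x ^ 2 * x by ring, Real.sqrt_mul (by positivity),
      Real.sqrt_sq hxpos.le, ← hudef]
  have hxune : x * u ≠ 0 := by positivity
  rw [Ubb, e1, e2, e3, e4, h2]
  ext i j
  fin_cases i <;> fin_cases j <;>
    simp [Matrix.mul_apply, Fin.sum_univ_three, Matrix.smul_apply,
      Matrix.cons_val', Matrix.cons_val_zero, Matrix.cons_val_one,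
      Matrix.head_cons, Matrix.empty_val', Matrix.cons_val_fin_one,
      Matrix.head_fin_const, Matrix.vecHead, Matrix.vecTail] <;>
    field_simp <;>
    (first | ring1 | linear_combination (2 * u ^ 3 * x) * ht | linear_combination (u ^ 3 * x) * ht | linear_combination 2 * ht | linear_combination ht)
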